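/- Let t(s) = v^{-1}(−R sin(s/v), R cos(s/v), K/2π) be the tangent indicatrix of the helix, and for n ∈ ℕ⁺ set t_n(i) := t((L/n)i) where L = 2πv. Let θ_n be the undirected angle between the normals t_n(0) × t_n(1) and t_n(−1) × t_n(0) (i.e., θ_n = arcsin ‖N_n⁺ × N_n⁻‖ with N_n^± = ±(t_n(0) × t_n(±1))/‖t_n(0) × t_n(±1)‖). Then lim_{n→∞} n·θ_n = K/v. -/

import Mathlib

open Real Filter


noncomputable abbrev E3 := EuclideanSpace ℝ (Fin 3)
noncomputable def vec3 (a b c : ℝ) : E3 := WithLp.toLp 2 ![a, b, c]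
noncomputable def cross (u v : E3) : E3 :=
  vec3 (u 1 * v 2 - u 2 * v 1) (u 2 * v 0 - u 0 * v 2) (u 0 * v 1 - u 1 * v 0)

lemma vec3_zero (a b c : ℝ) : vec3 a b c 0 = a := rfl
lemma vec3_one (a b c : ℝ) : vec3 a b c 1 = b := rfl
lemma vec3_two (a b c : ℝ) : vec3 a b c 2 = c := rfl

lemma smul_vec3 (r a b c : ℝ) : r • vec3 a b c = vec3 (r*a) (r*b) (r*c) := by
  ext i
  fin_cases i <;> simp [vec3]

lemma neg_vec3 (a b c : ℝ) : -(vec3 a b c) = vec3 (-a) (-b) (-c) := by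
  ext i
  fin_cases i <;> simp [vec3]

lemma cross_vec3 (a b c d e f : ℝ) :
    cross (vec3 a b c) (vec3 d e f) = vec3 (b*f - c*e) (c*d - a*f) (a*e - b*d) := rfl

lemma vec3_eq {a b c a' b' c' : ℝ} (h1 : a = a') (h2 : b = b') (h3 : c = c') :
    vec3 a b c = vec3 a' b' c' := by rw [h1, h2, h3]

lemma norm_vec3 (a b c : ℝ) : ‖vec3 a b c‖ = Real.sqrt (a^2 + b^2 + c^2) := by
  rw [EuclideanSpace.norm_eq]
  simp [Fin.sum_univ_three, vec3_zero, vec3_one, vec3_two, sq_abs]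

lemma theta_eq (R c v : ℝ) (hR : 0 < R) (hc : 0 < c) (hv : 0 < v) (hv2 : v^2 = R^2 + c^2)
    (a : ℝ) (hs : 0 < Real.sin a) (hC : Real.cos a < 1) :
    ‖cross
      (‖cross (v⁻¹ • vec3 0 R c) (v⁻¹ • vec3 (-(R * Real.sin a)) (R * Real.cos a) c)‖⁻¹ •
        cross (v⁻¹ • vec3 0 R c) (v⁻¹ • vec3 (-(R * Real.sin a)) (R * Real.cos a) c))
      (-(‖cross (v⁻¹ • vec3 0 R c) (v⁻¹ • vec3 (R * Real.sin a) (R * Real.cos a) c)‖⁻¹ •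
        cross (v⁻¹ • vec3 0 R c) (v⁻¹ • vec3 (R * Real.sin a) (R * Real.cos a) c)))‖
    = 2*c*v*(1 - Real.cos a)*Real.sin a / (c^2*(1 - Real.cos a)^2 + v^2*(Real.sin a)^2) := by
  set s := Real.sin a with hsdef
  set C := Real.cos a with hCdef
  set p := R*c*(1-C) with hp
  set q := R*c*s with hq
  set r := R^2*s with hr
  have h1C : 0 < 1 - C := by linarith
  have hppos : 0 < p := by rw [hp]; positivity
  have hqpos : 0 < q := by rw [hq]; positivity
  have hrpos : 0 < r := by rw [hr]; positivity
  set D := Real.sqrt (p^2 + q^2 + r^2) with hD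
  have hDpos : 0 < D := Real.sqrt_pos.mpr (by positivity)
  have hD0 : D ≠ 0 := ne_of_gt hDpos
  have hD2 : D^2 = p^2 + q^2 + r^2 := Real.sq_sqrt (by positivity)
  have hv0 : v ≠ 0 := ne_of_gt hv
  have hkey : ∀ x : ℝ, (v⁻¹*v⁻¹*D)⁻¹*(v⁻¹*v⁻¹*x) = D⁻¹*x := by
    intro x; field_simp
  have hA : cross (v⁻¹ • vec3 0 R c) (v⁻¹ • vec3 (-(R * s)) (R * C) c)
      = vec3 (v⁻¹*v⁻¹*p) (v⁻¹*v⁻¹*(-q)) (v⁻¹*v⁻¹*r) := by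
    rw [smul_vec3, smul_vec3, cross_vec3]
    exact vec3_eq (by rw [hp]; ring) (by rw [hq]; ring) (by rw [hr]; ring)
  have hB : cross (v⁻¹ • vec3 0 R c) (v⁻¹ • vec3 (R * s) (R * C) c)
      = vec3 (v⁻¹*v⁻¹*p) (v⁻¹*v⁻¹*q) (v⁻¹*v⁻¹*(-r)) := by
    rw [smul_vec3, smul_vec3, cross_vec3]
    exact vec3_eq (by rw [hp]; ring) (by rw [hq]; ring) (by rw [hr]; ring)
  have hnormA : ‖cross (v⁻¹ • vec3 0 R c) (v⁻¹ • vec3 (-(R * s)) (R * C) c)‖ = v⁻¹*v⁻¹*D := by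
    rw [hA, norm_vec3]
    rw [show (v⁻¹*v⁻¹*p)^2 + (v⁻¹*v⁻¹*(-q))^2 + (v⁻¹*v⁻¹*r)^2
      = (v⁻¹*v⁻¹)^2 * (p^2+q^2+r^2) by ring]
    rw [Real.sqrt_mul (by positivity), Real.sqrt_sq (by positivity)]
  have hnormB : ‖cross (v⁻¹ • vec3 0 R c) (v⁻¹ • vec3 (R * s) (R * C) c)‖ = v⁻¹*v⁻¹*D := by
    rw [hB, norm_vec3]
    rw [show (v⁻¹*v⁻¹*p)^2 + (v⁻¹*v⁻¹*q)^2 + (v⁻¹*v⁻¹*(-r))^2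
      = (v⁻¹*v⁻¹)^2 * (p^2+q^2+r^2) by ring]
    rw [Real.sqrt_mul (by positivity), Real.sqrt_sq (by positivity)]
  have hNp : (‖cross (v⁻¹ • vec3 0 R c) (v⁻¹ • vec3 (-(R * s)) (R * C) c)‖⁻¹ •
        cross (v⁻¹ • vec3 0 R c) (v⁻¹ • vec3 (-(R * s)) (R * C) c))
      = vec3 (D⁻¹*p) (D⁻¹*(-q)) (D⁻¹*r) := by
    rw [hnormA, hA, smul_vec3, hkey, hkey, hkey]
  have hNm : (-(‖cross (v⁻¹ • vec3 0 R c) (v⁻¹ • vec3 (R * s) (R * C) c)‖⁻¹ •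
        cross (v⁻¹ • vec3 0 R c) (v⁻¹ • vec3 (R * s) (R * C) c)))
      = vec3 (-(D⁻¹*p)) (-(D⁻¹*q)) (D⁻¹*r) := by
    rw [hnormB, hB, smul_vec3, hkey, hkey, hkey, neg_vec3]
    exact vec3_eq rfl rfl (by ring)
  rw [hNp, hNm, cross_vec3]
  rw [show (D⁻¹*(-q))*(D⁻¹*r) - (D⁻¹*r)*(-(D⁻¹*q)) = 0 by ring]
  rw [show (D⁻¹*r)*(-(D⁻¹*p)) - (D⁻¹*p)*(D⁻¹*r) = -(2*(D⁻¹*D⁻¹*(p*r))) by ring]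
  rw [show (D⁻¹*p)*(-(D⁻¹*q)) - (D⁻¹*(-q))*(-(D⁻¹*p)) = -(2*(D⁻¹*D⁻¹*(p*q))) by ring]
  rw [norm_vec3]
  have hthis : r^2 + q^2 = R^2*s^2*v^2 := by
    rw [hq, hr]; linear_combination (-(R^2*s^2)) * hv2
  have hins : (0:ℝ)^2 + (-(2*(D⁻¹*D⁻¹*(p*r))))^2 + (-(2*(D⁻¹*D⁻¹*(p*q))))^2
      = ((D⁻¹*D⁻¹) * (2*p*(R*s*v)))^2 := by
    linear_combination (4*(D⁻¹*D⁻¹)^2*p^2) * hthis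
  rw [hins, Real.sqrt_sq (by positivity)]
  have hsum : p^2 + q^2 + r^2 = R^2*(c^2*(1-C)^2 + v^2*s^2) := by
    rw [hp, hq, hr]; linear_combination (-(R^2*s^2)) * hv2
  have hDinv : D⁻¹*D⁻¹ = (R^2*(c^2*(1-C)^2 + v^2*s^2))⁻¹ := by
    rw [← hsum, ← hD2]
    rw [← mul_inv]
    rw [← pow_two]
  rw [hDinv, hp]
  have hden : 0 < c^2*(1-C)^2 + v^2*s^2 := by positivity
  rw [inv_mul_eq_div, div_eq_div_iff (by positivity) (by positivity)]
  ring

lemma tendsto_arcsin_div : Tendsto (fun x : ℝ => Real.arcsin x / x) (nhdsWithin 0 {x | x ≠ 0}) (nhds 1) := by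
  have h : HasDerivAt Real.arcsin 1 0 := by
    have := Real.hasDerivAt_arcsin (x := 0) (by norm_num) (by norm_num)
    simpa using this
  rw [hasDerivAt_iff_tendsto_slope] at h
  refine h.congr' ?_
  filter_upwards [self_mem_nhdsWithin] with x hx
  simp [slope_def_field, Real.arcsin_zero]

lemma tendsto_sin_div : Tendsto (fun x : ℝ => Real.sin x / x) (nhdsWithin 0 {x | x ≠ 0}) (nhds 1) := by
  have h : HasDerivAt Real.sin 1 0 := by simpa using Real.hasDerivAt_sin 0
  rw [hasDerivAt_iff_tendsto_slope] at h
  refine h.congr' ?_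
  filter_upwards [self_mem_nhdsWithin] with x hx
  simp [slope_def_field]

lemma key_tendsto (c v : ℝ) (hc : 0 < c) (hv : 0 < v) :
    Tendsto (fun a : ℝ => Real.arcsin (2*c*v*(1 - Real.cos a)*Real.sin a /
      (c^2*(1 - Real.cos a)^2 + v^2*(Real.sin a)^2)) / a) (nhdsWithin 0 (Set.Ioi 0)) (nhds (c/v)) := by
  set G : ℝ → ℝ := fun a => 2*c*v*(1 - Real.cos a)*Real.sin a /
      (c^2*(1 - Real.cos a)^2 + v^2*(Real.sin a)^2) with hG
  have hsub : nhdsWithin (0:ℝ) (Set.Ioi 0) ≤ nhdsWithin 0 {x | x ≠ 0} :=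
    nhdsWithin_mono 0 (fun x hx => ne_of_gt hx)
  have hmem : Set.Ioo (0:ℝ) 1 ∈ nhdsWithin (0:ℝ) (Set.Ioi 0) :=
    Ioo_mem_nhdsGT_of_mem ⟨le_refl _, by norm_num⟩
  -- basic facts on (0,1)
  have hfacts : ∀ a ∈ Set.Ioo (0:ℝ) 1, 0 < Real.sin a ∧ Real.cos a < 1 ∧ 0 < Real.cos a := by
    intro a ha
    have h1 : 0 < Real.sin a := Real.sin_pos_of_pos_of_lt_pi ha.1 (lt_trans ha.2 (by linarith [Real.pi_gt_three]))
    have h2 : 0 < Real.cos a := Real.cos_pos_of_mem_Ioo ⟨by linarith [Real.pi_gt_three, ha.1], by linarith [Real.pi_gt_three, ha.2]⟩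
    have h3 : Real.cos a < 1 := by nlinarith [Real.sin_sq_add_cos_sq a]
    exact ⟨h1, h3, h2⟩
  have hw : Tendsto (fun a : ℝ => Real.sin a / a) (nhdsWithin 0 (Set.Ioi 0)) (nhds 1) :=
    tendsto_sin_div.mono_left hsub
  have hcos : Tendsto Real.cos (nhdsWithin (0:ℝ) (Set.Ioi 0)) (nhds 1) := by
    simpa using (Real.continuous_cos.tendsto 0).mono_left nhdsWithin_le_nhds
  have hu : Tendsto (fun a : ℝ => (1 - Real.cos a) / a^2) (nhdsWithin 0 (Set.Ioi 0)) (nhds (1/2)) := by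
    have h2 : Tendsto (fun a : ℝ => (Real.sin a / a)^2 / (1 + Real.cos a))
        (nhdsWithin 0 (Set.Ioi 0)) (nhds (1/2)) := by
      have hden2 : Tendsto (fun a : ℝ => 1 + Real.cos a) (nhdsWithin 0 (Set.Ioi 0)) (nhds 2) := by
        have := (tendsto_const_nhds (x := (1:ℝ)) (f := nhdsWithin (0:ℝ) (Set.Ioi 0))).add hcos
        norm_num at this
        exact this
      have := (hw.pow 2).div hden2 (by norm_num)
      norm_num at this
      exact this
    refine h2.congr' ?_
    filter_upwards [hmem] with a ha
    obtain ⟨hs, hC1, hC0⟩ := hfacts a ha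
    have ha0 : a ≠ 0 := ne_of_gt ha.1
    have h1C : 1 + Real.cos a ≠ 0 := by positivity
    field_simp
    nlinarith [Real.sin_sq_add_cos_sq a]
  have haa : Tendsto (fun a : ℝ => a) (nhdsWithin (0:ℝ) (Set.Ioi 0)) (nhds 0) :=
    tendsto_id.mono_left nhdsWithin_le_nhds
  have hGa : Tendsto (fun a : ℝ => G a / a) (nhdsWithin 0 (Set.Ioi 0)) (nhds (c/v)) := by
    have hrhs : Tendsto (fun a : ℝ => 2*c*v*((1 - Real.cos a)/a^2)*(Real.sin a / a) /
        (c^2*((1 - Real.cos a)/a^2)^2*a^2 + v^2*(Real.sin a / a)^2))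
        (nhdsWithin 0 (Set.Ioi 0)) (nhds (c/v)) := by
      have hnum : Tendsto (fun a : ℝ => 2*c*v*((1 - Real.cos a)/a^2)*(Real.sin a / a))
          (nhdsWithin 0 (Set.Ioi 0)) (nhds (2*c*v*(1/2)*1)) :=
        ((tendsto_const_nhds.mul hu).mul hw)
      have hden : Tendsto (fun a : ℝ => c^2*((1 - Real.cos a)/a^2)^2*a^2 + v^2*(Real.sin a / a)^2)
          (nhdsWithin 0 (Set.Ioi 0)) (nhds (c^2*(1/2)^2*0^2 + v^2*1^2)) :=
        ((tendsto_const_nhds.mul (hu.pow 2)).mul (haa.pow 2)).add (tendsto_const_nhds.mul (hw.pow 2))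
      have := hnum.div hden (by
        simp only [ne_eq]
        positivity)
      convert this using 2
      · rfl
      · rw [div_eq_div_iff (ne_of_gt hv) (by positivity)]
        ring
    refine hrhs.congr' ?_
    filter_upwards [hmem] with a ha
    obtain ⟨hs, hC1, hC0⟩ := hfacts a ha
    have ha0 : (0:ℝ) < a := ha.1
    have hden : 0 < c^2*(1 - Real.cos a)^2 + v^2*(Real.sin a)^2 := by positivity
    rw [hG]
    field_simp
  have hGpos : ∀ᶠ a in nhdsWithin (0:ℝ) (Set.Ioi 0), G a ≠ 0 := by
    filter_upwards [hmem] with a ha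
    obtain ⟨hs, hC1, hC0⟩ := hfacts a ha
    have hden : 0 < c^2*(1 - Real.cos a)^2 + v^2*(Real.sin a)^2 := by positivity
    have hnum : 0 < 2*c*v*(1 - Real.cos a)*Real.sin a := by
      have : 0 < 1 - Real.cos a := by linarith
      positivity
    exact ne_of_gt (div_pos hnum hden)
  have hG0 : Tendsto G (nhdsWithin (0:ℝ) (Set.Ioi 0)) (nhdsWithin 0 {x | x ≠ 0}) := by
    rw [tendsto_nhdsWithin_iff]
    constructor
    · have := hGa.mul haa
      rw [mul_zero] at this
      refine this.congr' ?_
      filter_upwards [hmem] with a ha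
      field_simp [ne_of_gt ha.1]
    · exact hGpos
  have := (tendsto_arcsin_div.comp hG0).mul hGa
  rw [one_mul] at this
  refine this.congr' ?_
  filter_upwards [hGpos, hmem] with a hGa0 ha
  have ha0 : a ≠ 0 := ne_of_gt ha.1
  field_simp [Function.comp]
  exact div_mul_cancel₀ _ hGa0

/-- for the tangent indicatrix `t(s) = v⁻¹(−R sin(s/v), R cos(s/v), K/2π)`
of the helix, with `t_n(i) = t((L/n)i)` and `θ_n = arcsin ‖N_n⁺ × N_n⁻‖` where
`N_n^± = ±(t_n(0) × t_n(±1))/‖t_n(0) × t_n(±1)‖`, one has `n·θ_n → K/v`. -/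
theorem stmt_10 (R K v L : ℝ) (hR : 0 < R) (hK : 0 < K)
    (hv : v = Real.sqrt (R ^ 2 + (K / (2 * π)) ^ 2)) (hL : L = 2 * π * v)
    (t : ℝ → E3)
    (ht : t = fun s => (v⁻¹ : ℝ) •
      vec3 (-(R * Real.sin (s / v))) (R * Real.cos (s / v)) (K / (2 * π)))
    (tn : ℕ → ℤ → E3) (htn : ∀ n : ℕ, ∀ i : ℤ, tn n i = t ((L / n) * i))
    (Np Nm : ℕ → E3)
    (hNp : ∀ n, Np n = ‖cross (tn n 0) (tn n 1)‖⁻¹ • cross (tn n 0) (tn n 1))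
    (hNm : ∀ n, Nm n = -(‖cross (tn n 0) (tn n (-1))‖⁻¹ • cross (tn n 0) (tn n (-1))))
    (θ : ℕ → ℝ) (hθ : ∀ n, θ n = Real.arcsin ‖cross (Np n) (Nm n)‖) :
    Tendsto (fun n : ℕ => (n : ℝ) * θ n) atTop (nhds (K / v)) := by
  have hπ : 0 < π := Real.pi_pos
  set c := K / (2 * π) with hcdef
  have hc : 0 < c := by rw [hcdef]; positivity
  have hvpos : 0 < v := by
    rw [hv]
    exact Real.sqrt_pos.mpr (by positivity)
  have hv2 : v ^ 2 = R ^ 2 + c ^ 2 := by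
    rw [hv, Real.sq_sqrt (by positivity)]
  have hv0 : v ≠ 0 := ne_of_gt hvpos
  have ht' : ∀ x : ℝ, t x = v⁻¹ • vec3 (-(R * Real.sin (x / v))) (R * Real.cos (x / v)) c := by
    intro x; rw [ht]
  have hA : Tendsto (fun n : ℕ => 2 * π / (n : ℝ)) atTop (nhdsWithin 0 (Set.Ioi 0)) := by
    rw [tendsto_nhdsWithin_iff]
    constructor
    · exact tendsto_const_div_atTop_nhds_zero_nat (2 * π)
    · filter_upwards [eventually_ge_atTop 1] with n hn
      have hn' : (0:ℝ) < n := by exact_mod_cast Nat.lt_of_lt_of_le Nat.zero_lt_one hn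
      exact div_pos (by positivity) hn'
  have hmain := (key_tendsto c v hc hvpos).comp hA
  have h2 : Tendsto (fun n : ℕ => 2 * π *
      (Real.arcsin (2*c*v*(1 - Real.cos (2*π/(n:ℝ)))*Real.sin (2*π/(n:ℝ)) /
        (c^2*(1 - Real.cos (2*π/(n:ℝ)))^2 + v^2*(Real.sin (2*π/(n:ℝ)))^2)) / (2*π/(n:ℝ))))
      atTop (nhds (2 * π * (c / v))) := tendsto_const_nhds.mul hmain
  have hval : 2 * π * (c / v) = K / v := by
    rw [hcdef]; field_simp
  rw [← hval]
  refine h2.congr' ?_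
  filter_upwards [eventually_ge_atTop 7] with n hn
  have hn7 : (7:ℝ) ≤ (n:ℝ) := by exact_mod_cast hn
  have hn0 : (0:ℝ) < (n:ℝ) := by linarith
  have hnne : (n:ℝ) ≠ 0 := ne_of_gt hn0
  have hπ315 : π < 3.15 := Real.pi_lt_d2
  set a := 2*π/(n:ℝ) with hadef
  have ha0 : 0 < a := by rw [hadef]; positivity
  have ha1 : a < 1 := by
    rw [hadef, div_lt_one hn0]; linarith
  have hs : 0 < Real.sin a := Real.sin_pos_of_pos_of_lt_pi ha0 (by linarith [Real.pi_gt_three])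
  have hCa : Real.cos a < 1 := by
    nlinarith [Real.sin_sq_add_cos_sq a, Real.neg_one_le_cos a]
  have h0 : tn n 0 = v⁻¹ • vec3 0 R c := by
    rw [htn, ht']
    norm_num
  have harg1 : L/(n:ℝ) * (((1:ℤ)):ℝ) / v = a := by
    rw [hL, hadef]; push_cast; field_simp
  have harg2 : L/(n:ℝ) * (((-1:ℤ)):ℝ) / v = -a := by
    rw [hL, hadef]; push_cast; field_simp
  have h1 : tn n 1 = v⁻¹ • vec3 (-(R * Real.sin a)) (R * Real.cos a) c := by
    rw [htn, ht', harg1]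
  have hm1 : tn n (-1) = v⁻¹ • vec3 (R * Real.sin a) (R * Real.cos a) c := by
    rw [htn, ht', harg2, Real.sin_neg, Real.cos_neg]
    rw [show vec3 (-(R * -Real.sin a)) (R*Real.cos a) c
        = vec3 (R*Real.sin a) (R*Real.cos a) c from vec3_eq (by ring) rfl rfl]
  have hθn : θ n = Real.arcsin (2*c*v*(1 - Real.cos a)*Real.sin a /
      (c^2*(1 - Real.cos a)^2 + v^2*(Real.sin a)^2)) := by
    rw [hθ, hNp, hNm, h0, h1, hm1, theta_eq R c v hR hc hvpos hv2 a hs hCa]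
  show 2*π * (Real.arcsin (2*c*v*(1 - Real.cos a)*Real.sin a /
      (c^2*(1 - Real.cos a)^2 + v^2*(Real.sin a)^2)) / a) = (n:ℝ) * θ n
  rw [hθn, hadef]
  field_simp
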